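/- Every Hermitian representation on a line bundle has Kostant form (Proposition: 'Any Hermitian representation of a Lie algebroid A on a line bundle L → S is of the form π(J*X) = ∇_{α(X)} − 2πi⟨μ̃, J*X⟩'): Let L be an A-module with a Hermitian metric h such that (i) the map sending a ∈ A to the scalar-multiplication endomorphism s ↦ a • s is a bijection from A onto the A-module endomorphisms of L (L is a line-bundle module), and (ii) there exist s₀, t₀ ∈ L with h(s₀, t₀) = 1. Let D : g → End_ℝ(L) satisfy the Leibniz rule over α and be Hermitian with respect to h, and let π : g → End_ℝ(L) also satisfy the Leibniz rule over α and be Hermitian with respect to h. Then there is a unique map μ : g → A such that π(X)(s) = D(X)(s) − ((2πi) • μ(X)) • s for all X ∈ g and s ∈ L, and this μ satisfies star(μ(X)) = μ(X) for all X ∈ g. -/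
import Mathlib


/-- **Every Hermitian representation on a line bundle has Kostant form.**
If `L` is a line-bundle module over `A` (scalar multiplication is a bijection of
`A` onto the `A`-module endomorphisms of `L`) carrying a Hermitian metric `h`
attaining the value `1`, and `D, π : g → End_ℝ(L)` both satisfy the Leibniz rule
over `α` and are Hermitian with respect to `h`, then there is a unique
`μ : g → A` with `π(X) s = D(X) s − ((2πi) • μ(X)) • s`, and this `μ` is
real-valued: `star (μ X) = μ X`. -/
theorem hermitian_representation_kostant_form
    {A : Type*} [CommRing A] [Algebra ℂ A] [StarRing A]
    {g : Type*} [LieRing g] [LieAlgebra ℝ g]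
    {L : Type*} [AddCommGroup L] [Module A L] [Module ℝ L]
    (hstarA : ∀ (c : ℂ) (a : A), star (c • a) = (starRingEnd ℂ c) • star a)
    (α : g →ₗ[ℝ] Derivation ℂ A A)
    (hα : ∀ (X Y : g) (a : A), α ⁅X, Y⁆ a = α X (α Y a) - α Y (α X a))
    (hline : Function.Bijective fun a : A => LinearMap.lsmul A L a)
    (h : L → L → A)
    (haddl : ∀ (s s' t : L), h (s + s') t = h s t + h s' t)
    (haddr : ∀ (s t t' : L), h s (t + t') = h s t + h s t')
    (hsmull : ∀ (a : A) (s t : L), h (a • s) t = star a * h s t)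
    (hsmulr : ∀ (a : A) (s t : L), h s (a • t) = a * h s t)
    (hone : ∃ s₀ t₀ : L, h s₀ t₀ = 1)
    (D : g →ₗ[ℝ] L →ₗ[ℝ] L)
    (hD : ∀ (X : g) (a : A) (s : L), D X (a • s) = a • D X s + α X a • s)
    (hDherm : ∀ (X : g) (s t : L), h (D X s) t + h s (D X t) = α X (h s t))
    (π : g →ₗ[ℝ] L →ₗ[ℝ] L)
    (hπLeib : ∀ (X : g) (a : A) (s : L), π X (a • s) = a • π X s + α X a • s)
    (hπherm : ∀ (X : g) (s t : L), h (π X s) t + h s (π X t) = α X (h s t)) :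
    ∃ μ : g → A,
      (∀ (X : g) (s : L),
        π X s = D X s - ((2 * (Real.pi : ℂ) * Complex.I) • μ X) • s) ∧
      (∀ X : g, star (μ X) = μ X) ∧
      (∀ μ' : g → A,
        (∀ (X : g) (s : L),
          π X s = D X s - ((2 * (Real.pi : ℂ) * Complex.I) • μ' X) • s) → μ' = μ) := by

  classical
  obtain ⟨s₀, t₀, hone⟩ := hone
  set ι : ℂ := 2 * (Real.pi : ℂ) * Complex.I with hι
  have hι0 : ι ≠ 0 :=
    mul_ne_zero (mul_ne_zero two_ne_zero (Complex.ofReal_ne_zero.mpr Real.pi_ne_zero))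
      Complex.I_ne_zero
  have key : ∀ X : g, ∃ c : A, ∀ s : L, π X s - D X s = c • s := by
    intro X
    let E : L →ₗ[A] L :=
    { toFun := fun s => π X s - D X s
      map_add' := by intro s t; simp only [map_add]; abel
      map_smul' := by
        intro a s
        simp only [hπLeib X a s, hD X a s, smul_sub, RingHom.id_apply]
        abel }
    obtain ⟨c, hc⟩ := hline.2 E
    refine ⟨c, fun s => ?_⟩
    have := congrArg (fun f : L →ₗ[A] L => f s) hc
    simpa [E] using this.symm
  choose c hc using key
  have hcstar : ∀ X : g, star (c X) = - c X := by
    intro X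
    have hsub : ∀ s s' t : L, h (s - s') t = h s t - h s' t := by
      intro s s' t
      have := haddl (s - s') s' t
      simp only [sub_add_cancel] at this
      exact eq_sub_of_add_eq this.symm
    have hsub' : ∀ s t t' : L, h s (t - t') = h s t - h s t' := by
      intro s t t'
      have := haddr s (t - t') t'
      simp only [sub_add_cancel] at this
      exact eq_sub_of_add_eq this.symm
    have e1 : h (π X s₀ - D X s₀) t₀ + h s₀ (π X t₀ - D X t₀) = 0 := by
      rw [hsub, hsub']
      linear_combination (hπherm X s₀ t₀) - (hDherm X s₀ t₀)
    rw [hc X s₀, hc X t₀, hsmull, hsmulr, hone, mul_one, mul_one] at e1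
    linear_combination e1
  refine ⟨fun X => (-ι⁻¹) • c X, ?_, ?_, ?_⟩
  · intro X s
    have hsm : ι • ((-ι⁻¹) • c X) = - c X := by
      rw [smul_smul, mul_neg, mul_inv_cancel₀ hι0, neg_smul, one_smul]
    rw [hsm, neg_smul, sub_neg_eq_add, ← hc X s]
    abel
  · intro X
    rw [hstarA, hcstar]
    have hconjι : (starRingEnd ℂ) ι = -ι := by
      rw [hι, map_mul, map_mul, Complex.conj_I, Complex.conj_ofReal, map_ofNat]
      ring
    have hconj : (starRingEnd ℂ) (-ι⁻¹) = ι⁻¹ := by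
      rw [map_neg, map_inv₀, hconjι, inv_neg, neg_neg]
    rw [hconj, smul_neg, ← neg_smul]
  · intro μ' hμ'
    funext X
    have h1 : ∀ s : L, (ι • μ' X) • s = (- c X) • s := by
      intro s
      have h2 := hμ' X s
      have h3 : (ι • μ' X) • s = D X s - π X s := by rw [h2]; abel
      rw [neg_smul, ← hc X s, h3]
      abel
    have h2 : ι • μ' X = - c X := by
      apply hline.1
      ext s
      simpa using h1 s
    have := congrArg (fun a : A => ι⁻¹ • a) h2
    simpa [inv_smul_smul₀ hι0, neg_smul, smul_neg] using this
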